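/- For a > 0 and nonnegative integers l0, l1, l2, l3 with l = l0+l1+l2+l3, the integral ∫_{ℝ³} (x1²+x2²+x3²)^{l0/2} x1^{l1} x2^{l2} x3^{l3} e^{−a√(x1²+x2²+x3²)} dx equals 2 a^{−l−3} Γ(l+3) Γ(k1+1/2)Γ(k2+1/2)Γ(k3+1/2) / Γ(k1+k2+k3+3/2) if l1=2k1, l2=2k2, l3=2k3 are all even, and equals 0 if any of l1, l2, l3 is odd. -/

import Mathlib

open Real MeasureTheory Set Metric

noncomputable section

local notation "E3" => EuclideanSpace ℝ (Fin 3)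

/-- Polar factorization of an integral of a homogeneous function times a radial one. -/
lemma polar_factorization (m : ℕ) (f : E3 → ℝ)
    (hf : ∀ (c : ℝ), 0 < c → ∀ x : E3, f (c • x) = c ^ m * f x) (g : ℝ → ℝ) :
    ∫ x : E3, f x * g ‖x‖ =
      (∫ θ : sphere (0 : E3) 1, f θ ∂((volume : Measure E3).toSphere)) *
        ∫ r in Ioi (0 : ℝ), r ^ (m + 2) * g r := by
  have h3 : Module.finrank ℝ E3 = 3 := finrank_euclideanSpace_fin
  calc
    ∫ x : E3, f x * g ‖x‖
        = ∫ x : ({(0 : E3)}ᶜ : Set E3), f x.1 * g ‖x.1‖ ∂((volume : Measure E3).comap (↑)) := by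
          rw [integral_subtype_comap (measurableSet_singleton _).compl
            (fun x => f x * g ‖x‖), MeasureTheory.restrict_compl_singleton]
    _ = ∫ y : sphere (0 : E3) 1 × Ioi (0 : ℝ),
          (f y.1.1) * (y.2.1 ^ m * g y.2.1)
          ∂((volume : Measure E3).toSphere.prod
            (.volumeIoiPow (Module.finrank ℝ E3 - 1))) := by
          rw [← (volume : Measure E3).measurePreserving_homeomorphUnitSphereProd.integral_comp
            (Homeomorph.measurableEmbedding _)
            (fun y : sphere (0 : E3) 1 × Ioi (0 : ℝ) => (f y.1.1) * (y.2.1 ^ m * g y.2.1))]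
          refine integral_congr_ae (Filter.Eventually.of_forall fun x => ?_)
          have hx : x.1 ≠ 0 := x.2
          have hn : (0:ℝ) < ‖x.1‖ := norm_pos_iff.2 hx
          simp only [homeomorphUnitSphereProd_apply_fst_coe, homeomorphUnitSphereProd_apply_snd_coe]
          rw [hf _ (inv_pos.2 hn) x.1]
          have h1 : ‖x.1‖ ^ m * ‖x.1‖⁻¹ ^ m = 1 := by
            rw [← mul_pow, mul_inv_cancel₀ hn.ne', one_pow]
          linear_combination (-(f x.1 * g ‖x.1‖)) * h1
    _ = (∫ θ : sphere (0 : E3) 1, f θ ∂((volume : Measure E3).toSphere)) *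
          ∫ r : Ioi (0:ℝ), r.1 ^ m * g r.1 ∂(Measure.volumeIoiPow (Module.finrank ℝ E3 - 1)) :=
          integral_prod_mul (fun θ : sphere (0 : E3) 1 => f θ.1)
            (fun r : Ioi (0:ℝ) => r.1 ^ m * g r.1)
    _ = (∫ θ : sphere (0 : E3) 1, f θ ∂((volume : Measure E3).toSphere)) *
          ∫ r in Ioi (0 : ℝ), r ^ (m + 2) * g r := by
          congr 1
          rw [h3]
          simp only [Measure.volumeIoiPow, ENNReal.ofReal]
          rw [integral_withDensity_eq_integral_smul
            ((measurable_subtype_coe.pow_const _).real_toNNReal)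
            (fun r : Ioi (0:ℝ) => r.1 ^ m * g r.1),
            integral_subtype_comap measurableSet_Ioi
              (fun a : ℝ => Real.toNNReal (a ^ (3 - 1)) • (a ^ m * g a))]
          refine setIntegral_congr_fun measurableSet_Ioi (fun x hx => ?_)
          rw [NNReal.smul_def, Real.coe_toNNReal _ (pow_nonneg (le_of_lt hx) _)]
          rw [smul_eq_mul, pow_add]
          ring

lemma gauss_moment (k : ℕ) :
    ∫ t : ℝ, t ^ (2 * k) * Real.exp (-t ^ 2) = Real.Gamma (k + 1 / 2) := by
  have h1 : ∀ t : ℝ, t ^ (2 * k) * Real.exp (-t ^ 2)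
      = |t| ^ (2 * k) * Real.exp (-|t| ^ 2) := by
    intro t
    rw [pow_mul, pow_mul, sq_abs]
  rw [funext h1, integral_comp_abs (f := fun t : ℝ => t ^ (2 * k) * Real.exp (-t ^ 2))]
  have h2 : ∫ x in Ioi (0:ℝ), x ^ (2 * k) * Real.exp (-x ^ 2)
      = ∫ x in Ioi (0:ℝ), x ^ ((2 * k : ℕ) : ℝ) * Real.exp (-x ^ (2:ℝ)) := by
    refine setIntegral_congr_fun measurableSet_Ioi (fun x hx => ?_)
    rw [Real.rpow_natCast, Real.rpow_two]
  rw [h2, integral_rpow_mul_exp_neg_rpow (by norm_num) (lt_of_lt_of_le neg_one_lt_zero (by positivity))]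
  rw [show (((2 * k : ℕ) : ℝ) + 1) / 2 = (k : ℝ) + 1 / 2 by push_cast; ring]
  ring

lemma radial_gauss (m : ℕ) :
    ∫ r in Ioi (0:ℝ), r ^ (m + 2) * Real.exp (-r ^ 2)
      = (1 / 2) * Real.Gamma (((m : ℝ) + 3) / 2) := by
  have h2 : ∫ x in Ioi (0:ℝ), x ^ (m + 2) * Real.exp (-x ^ 2)
      = ∫ x in Ioi (0:ℝ), x ^ ((m + 2 : ℕ) : ℝ) * Real.exp (-x ^ (2:ℝ)) := by
    refine setIntegral_congr_fun measurableSet_Ioi (fun x hx => ?_)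
    rw [Real.rpow_natCast, Real.rpow_two]
  rw [h2, integral_rpow_mul_exp_neg_rpow (by norm_num) (lt_of_lt_of_le neg_one_lt_zero (by positivity))]
  rw [show (((m + 2 : ℕ) : ℝ) + 1) / 2 = ((m : ℝ) + 3) / 2 by push_cast; ring]

lemma norm_E3 (x : E3) : ‖x‖ = Real.sqrt (x 0 ^ 2 + x 1 ^ 2 + x 2 ^ 2) := by
  rw [EuclideanSpace.norm_eq]
  simp [Fin.sum_univ_three, Real.norm_eq_abs, sq_abs]

lemma sphere_moment (k1 k2 k3 : ℕ) :
    ∫ θ : sphere (0 : E3) 1,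
        ((θ : E3) 0 ^ (2 * k1) * (θ : E3) 1 ^ (2 * k2) * (θ : E3) 2 ^ (2 * k3))
          ∂((volume : Measure E3).toSphere)
    = 2 * (Real.Gamma (k1 + 1 / 2) * Real.Gamma (k2 + 1 / 2) * Real.Gamma (k3 + 1 / 2)) /
        Real.Gamma ((k1 + k2 + k3 : ℝ) + 3 / 2) := by
  have hf : ∀ (c : ℝ), 0 < c → ∀ x : E3,
      (fun x : E3 => x 0 ^ (2 * k1) * x 1 ^ (2 * k2) * x 2 ^ (2 * k3)) (c • x)
        = c ^ (2 * k1 + (2 * k2 + 2 * k3)) *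
          (fun x : E3 => x 0 ^ (2 * k1) * x 1 ^ (2 * k2) * x 2 ^ (2 * k3)) x := by
    intro c hc x
    simp only [PiLp.smul_apply, smul_eq_mul, mul_pow, pow_add]
    ring
  have key := polar_factorization (2 * k1 + (2 * k2 + 2 * k3))
    (fun x : E3 => x 0 ^ (2 * k1) * x 1 ^ (2 * k2) * x 2 ^ (2 * k3)) hf
    (fun r => Real.exp (-r ^ 2))
  have lhs_eq : (∫ x : E3, (fun x : E3 => x 0 ^ (2 * k1) * x 1 ^ (2 * k2) * x 2 ^ (2 * k3)) x *
        (fun r => Real.exp (-r ^ 2)) ‖x‖)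
      = Real.Gamma (k1 + 1 / 2) * Real.Gamma (k2 + 1 / 2) * Real.Gamma (k3 + 1 / 2) := by
    have e1 : (fun x : E3 => (fun x : E3 => x 0 ^ (2 * k1) * x 1 ^ (2 * k2) * x 2 ^ (2 * k3)) x *
          (fun r => Real.exp (-r ^ 2)) ‖x‖)
        = fun x : E3 => ∏ i, (fun i (t : ℝ) => t ^ (2 * ![k1, k2, k3] i) * Real.exp (-t ^ 2)) i (x i) := by
      funext x
      simp only [Fin.prod_univ_three, Matrix.cons_val_zero, Matrix.cons_val_one, Matrix.head_cons,
        Matrix.cons_val_two, Matrix.tail_cons]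
      rw [norm_E3 x, Real.sq_sqrt (by positivity),
        show -(x 0 ^ 2 + x 1 ^ 2 + x 2 ^ 2) = -(x 0) ^ 2 + (-(x 1) ^ 2 + -(x 2) ^ 2) by ring,
        Real.exp_add, Real.exp_add]
      ring
    rw [e1]
    have step : (∫ x : E3, ∏ i, (fun i (t : ℝ) => t ^ (2 * ![k1, k2, k3] i) * Real.exp (-t ^ 2)) i (x i))
        = ∫ y : Fin 3 → ℝ, ∏ i, (fun i (t : ℝ) => t ^ (2 * ![k1, k2, k3] i) * Real.exp (-t ^ 2)) i (y i) :=
      (EuclideanSpace.volume_preserving_symm_measurableEquiv_toLp (Fin 3)).integral_comp'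
        (fun y : Fin 3 → ℝ => ∏ i, (fun i (t : ℝ) => t ^ (2 * ![k1, k2, k3] i) * Real.exp (-t ^ 2)) i (y i))
    rw [step]; erw [integral_fintype_prod_eq_prod (ι := Fin 3)
        (fun i (t : ℝ) => t ^ (2 * ![k1, k2, k3] i) * Real.exp (-t ^ 2))]
    simp [Fin.prod_univ_three, gauss_moment]
  rw [lhs_eq, radial_gauss] at key
  have hG : 0 < Real.Gamma ((k1 + k2 + k3 : ℝ) + 3 / 2) := Real.Gamma_pos_of_pos (by positivity)
  rw [show (((2 * k1 + (2 * k2 + 2 * k3) : ℕ) : ℝ) + 3) / 2 = (k1 + k2 + k3 : ℝ) + 3 / 2 by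
    push_cast; ring] at key
  rw [eq_div_iff hG.ne']
  linear_combination (-2 : ℝ) * key

lemma integral_negInvariant_zero (i : Fin 3) (f : (Fin 3 → ℝ) → ℝ)
    (hmeas : AEStronglyMeasurable f volume)
    (hodd : ∀ x : Fin 3 → ℝ, f (fun j => if j = i then -(x j) else x j) = -f x) :
    ∫ x : Fin 3 → ℝ, f x = 0 := by
  have hT : MeasurePreserving (fun (x : Fin 3 → ℝ) (j : Fin 3) => if j = i then -(x j) else x j)
      volume volume := by
    refine volume_preserving_pi (α' := fun _ : Fin 3 => ℝ) (β' := fun _ : Fin 3 => ℝ)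
      (f := fun j t => if j = i then -t else t) (fun j => ?_)
    by_cases h : j = i
    · simp only [h, if_true]
      exact Measure.measurePreserving_neg volume
    · simp only [h, if_false]
      exact MeasurePreserving.id volume
  have h1 : ∫ x : Fin 3 → ℝ, f x
      = ∫ x : Fin 3 → ℝ, f (fun j => if j = i then -(x j) else x j) := by
    conv_lhs => rw [← hT.map_eq]
    exact integral_map hT.measurable.aemeasurable (hT.map_eq.symm ▸ hmeas)
  have h2 : ∫ x : Fin 3 → ℝ, f x = - ∫ x : Fin 3 → ℝ, f x := by
    conv_lhs => rw [h1, funext hodd]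
    exact integral_neg f
  linarith [h2]

theorem integral_radial_monomial (a : ℝ) (ha : 0 < a) (l0 l1 l2 l3 : ℕ) :
    (∀ k1 k2 k3 : ℕ, l1 = 2 * k1 → l2 = 2 * k2 → l3 = 2 * k3 →
      (∫ x : Fin 3 → ℝ,
          Real.sqrt (x 0 ^ 2 + x 1 ^ 2 + x 2 ^ 2) ^ l0 *
            x 0 ^ l1 * x 1 ^ l2 * x 2 ^ l3 *
            Real.exp (-a * Real.sqrt (x 0 ^ 2 + x 1 ^ 2 + x 2 ^ 2))) =
        2 * a ^ (-(l0 + l1 + l2 + l3 : ℝ) - 3) *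
          Real.Gamma ((l0 + l1 + l2 + l3 : ℝ) + 3) *
          (Real.Gamma (k1 + 1 / 2) * Real.Gamma (k2 + 1 / 2) * Real.Gamma (k3 + 1 / 2) /
            Real.Gamma ((k1 + k2 + k3 : ℝ) + 3 / 2))) ∧
    ((Odd l1 ∨ Odd l2 ∨ Odd l3) →
      (∫ x : Fin 3 → ℝ,
          Real.sqrt (x 0 ^ 2 + x 1 ^ 2 + x 2 ^ 2) ^ l0 *
            x 0 ^ l1 * x 1 ^ l2 * x 2 ^ l3 *
            Real.exp (-a * Real.sqrt (x 0 ^ 2 + x 1 ^ 2 + x 2 ^ 2))) = 0) := by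
  constructor
  · rintro k1 k2 k3 rfl rfl rfl
    have hf : ∀ (c : ℝ), 0 < c → ∀ x : E3,
        (fun x : E3 => x 0 ^ (2 * k1) * x 1 ^ (2 * k2) * x 2 ^ (2 * k3)) (c • x)
          = c ^ (2 * k1 + (2 * k2 + 2 * k3)) *
            (fun x : E3 => x 0 ^ (2 * k1) * x 1 ^ (2 * k2) * x 2 ^ (2 * k3)) x := by
      intro c hc x
      simp only [PiLp.smul_apply, smul_eq_mul, mul_pow, pow_add]
      ring
    have key := polar_factorization (2 * k1 + (2 * k2 + 2 * k3))
      (fun x : E3 => x 0 ^ (2 * k1) * x 1 ^ (2 * k2) * x 2 ^ (2 * k3)) hf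
      (fun r => r ^ l0 * Real.exp (-a * r))
    have R_eq : (∫ r in Ioi (0:ℝ), r ^ (2 * k1 + (2 * k2 + 2 * k3) + 2) *
          (r ^ l0 * Real.exp (-a * r)))
        = a ^ (-((l0 + 2 * k1 + 2 * k2 + 2 * k3 : ℕ) : ℝ) - 3) *
            Real.Gamma (((l0 + 2 * k1 + 2 * k2 + 2 * k3 : ℕ) : ℝ) + 3) := by
      have e : ∀ r ∈ Ioi (0:ℝ), r ^ (2 * k1 + (2 * k2 + 2 * k3) + 2) * (r ^ l0 * Real.exp (-a * r))
          = r ^ (((2 * k1 + (2 * k2 + 2 * k3) + 2 + l0 : ℕ)) : ℝ) * Real.exp (-a * r ^ (1:ℝ)) := by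
        intro r hr
        rw [Real.rpow_natCast, Real.rpow_one, pow_add]
        ring
      rw [setIntegral_congr_fun measurableSet_Ioi e,
        integral_rpow_mul_exp_neg_mul_rpow one_pos
          (lt_of_lt_of_le neg_one_lt_zero (by positivity)) ha]
      rw [show (-((((2 * k1 + (2 * k2 + 2 * k3) + 2 + l0 : ℕ)) : ℝ) + 1) / 1)
          = -((l0 + 2 * k1 + 2 * k2 + 2 * k3 : ℕ) : ℝ) - 3 by push_cast; ring,
        show (((((2 * k1 + (2 * k2 + 2 * k3) + 2 + l0 : ℕ)) : ℝ) + 1) / 1)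
          = ((l0 + 2 * k1 + 2 * k2 + 2 * k3 : ℕ) : ℝ) + 3 by push_cast; ring]
      ring
    rw [R_eq, sphere_moment] at key
    calc
      ∫ x : Fin 3 → ℝ,
          Real.sqrt (x 0 ^ 2 + x 1 ^ 2 + x 2 ^ 2) ^ l0 *
            x 0 ^ (2 * k1) * x 1 ^ (2 * k2) * x 2 ^ (2 * k3) *
            Real.exp (-a * Real.sqrt (x 0 ^ 2 + x 1 ^ 2 + x 2 ^ 2))
          = ∫ x : E3, (fun y : Fin 3 → ℝ =>
              Real.sqrt (y 0 ^ 2 + y 1 ^ 2 + y 2 ^ 2) ^ l0 *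
                y 0 ^ (2 * k1) * y 1 ^ (2 * k2) * y 2 ^ (2 * k3) *
                Real.exp (-a * Real.sqrt (y 0 ^ 2 + y 1 ^ 2 + y 2 ^ 2)))
              ((MeasurableEquiv.toLp 2 (Fin 3 → ℝ)).symm x) :=
        ((EuclideanSpace.volume_preserving_symm_measurableEquiv_toLp (Fin 3)).integral_comp' _).symm
      _ = ∫ x : E3, (fun x : E3 => x 0 ^ (2 * k1) * x 1 ^ (2 * k2) * x 2 ^ (2 * k3)) x *
            (fun r => r ^ l0 * Real.exp (-a * r)) ‖x‖ := by
        refine integral_congr_ae (Filter.Eventually.of_forall fun x => ?_)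
        show Real.sqrt (x 0 ^ 2 + x 1 ^ 2 + x 2 ^ 2) ^ l0 *
              x 0 ^ (2 * k1) * x 1 ^ (2 * k2) * x 2 ^ (2 * k3) *
              Real.exp (-a * Real.sqrt (x 0 ^ 2 + x 1 ^ 2 + x 2 ^ 2))
            = x 0 ^ (2 * k1) * x 1 ^ (2 * k2) * x 2 ^ (2 * k3) *
              (‖x‖ ^ l0 * Real.exp (-a * ‖x‖))
        rw [norm_E3 x]
        ring
      _ = 2 * a ^ (-((l0 : ℝ) + (2 * k1 : ℕ) + (2 * k2 : ℕ) + (2 * k3 : ℕ)) - 3) *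
            Real.Gamma (((l0 : ℝ) + (2 * k1 : ℕ) + (2 * k2 : ℕ) + (2 * k3 : ℕ)) + 3) *
            (Real.Gamma (k1 + 1 / 2) * Real.Gamma (k2 + 1 / 2) * Real.Gamma (k3 + 1 / 2) /
              Real.Gamma ((k1 + k2 + k3 : ℝ) + 3 / 2)) := by
        rw [key]
        rw [show (-((l0 : ℝ) + (2 * k1 : ℕ) + (2 * k2 : ℕ) + (2 * k3 : ℕ)) - 3)
            = -((l0 + 2 * k1 + 2 * k2 + 2 * k3 : ℕ) : ℝ) - 3 by push_cast; ring,
          show (((l0 : ℝ) + (2 * k1 : ℕ) + (2 * k2 : ℕ) + (2 * k3 : ℕ)) + 3)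
            = ((l0 + 2 * k1 + 2 * k2 + 2 * k3 : ℕ) : ℝ) + 3 by push_cast; ring]
        ring
  · intro hodd
    have hmeas : AEStronglyMeasurable (fun x : Fin 3 → ℝ =>
        Real.sqrt (x 0 ^ 2 + x 1 ^ 2 + x 2 ^ 2) ^ l0 *
          x 0 ^ l1 * x 1 ^ l2 * x 2 ^ l3 *
          Real.exp (-a * Real.sqrt (x 0 ^ 2 + x 1 ^ 2 + x 2 ^ 2))) volume := by
      apply Continuous.aestronglyMeasurable
      fun_prop
    rcases hodd with h | h | h
    · refine integral_negInvariant_zero 0 _ hmeas fun x => ?_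
      simp only [show ∀ z : ℝ, (if (0:Fin 3) = 0 then -z else z) = -z from fun z => if_pos rfl, if_true, if_false,
        show ∀ z : ℝ, (if (1:Fin 3) = 0 then -z else z) = z from fun z => if_neg (by decide),
        show ∀ z : ℝ, (if (2:Fin 3) = 0 then -z else z) = z from fun z => if_neg (by decide)]
      rw [neg_sq, Odd.neg_pow h]
      ring
    · refine integral_negInvariant_zero 1 _ hmeas fun x => ?_
      simp only [show ∀ z : ℝ, (if (0:Fin 3) = 1 then -z else z) = z from fun z => if_neg (by decide),
        show ∀ z : ℝ, (if (1:Fin 3) = 1 then -z else z) = -z from fun z => if_pos rfl, if_true, if_false,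
        show ∀ z : ℝ, (if (2:Fin 3) = 1 then -z else z) = z from fun z => if_neg (by decide)]
      rw [neg_sq, Odd.neg_pow h]
      ring
    · refine integral_negInvariant_zero 2 _ hmeas fun x => ?_
      simp only [show ∀ z : ℝ, (if (0:Fin 3) = 2 then -z else z) = z from fun z => if_neg (by decide),
        show ∀ z : ℝ, (if (1:Fin 3) = 2 then -z else z) = z from fun z => if_neg (by decide),
        show ∀ z : ℝ, (if (2:Fin 3) = 2 then -z else z) = -z from fun z => if_pos rfl, if_true, if_false]
      rw [neg_sq, Odd.neg_pow h]
      ring
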